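/- Let M be a Markov kernel on a measurable space E admitting a density with respect to a measure λ satisfying M̲ ≤ M(x,y) ≤ M̄ for all x, y ∈ E, where 0 < M̲ ≤ M̄ < ∞. Then for any random probability measures μ and ν on E, E H²(μM, νM) ≤ (1/8)(M̄/M̲)² · sup over measurable φ with osc(φ) ≤ 1 of E(|μ(φ) − ν(φ)|²). -/

import Mathlib

open MeasureTheory ProbabilityTheory ENNReal Filter

noncomputable section

/-- Total variation distance between measures. -/
def tvDist {E : Type*} [MeasurableSpace E] (μ ν : Measure E) : ℝ :=
  ⨆ A : {s : Set E // MeasurableSet s}, |(μ A.1).toReal - (ν A.1).toReal|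

/-- Dobrushin contraction coefficient of a Markov kernel. -/
def dobrushin {E : Type*} [MeasurableSpace E] (M : Kernel E E) : ℝ :=
  ⨆ x, ⨆ y, tvDist (M x) (M y)

/-- Boltzmann–Gibbs update Ψ. -/
def BG {E : Type*} [MeasurableSpace E] (G : E → ℝ) (μ : Measure E) : Measure E :=
  (∫⁻ x, ENNReal.ofReal (G x) ∂μ)⁻¹ • μ.withDensity fun x => ENNReal.ofReal (G x)

/-- One-step map `Φ_j(μ) = Ψ_{j-1}(μ) M_j` (for `j ≥ 1`). -/
def Phi {E : Type*} [MeasurableSpace E] (G : ℕ → E → ℝ) (M : ℕ → Kernel E E)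
    (j : ℕ) (μ : Measure E) : Measure E :=
  (BG (G (j - 1)) μ).bind (M j)

/-- Iterated map `Φ_{0,n}`. -/
def PhiComp {E : Type*} [MeasurableSpace E] (G : ℕ → E → ℝ) (M : ℕ → Kernel E E) :
    ℕ → Measure E → Measure E
  | 0 => id
  | n + 1 => fun μ => Phi G M (n + 1) (PhiComp G M n μ)

/-- Empirical measure of `N` particles. -/
def empMeas {E : Type*} [MeasurableSpace E] {N : ℕ} (x : Fin N → E) : Measure E :=
  ((N : ℝ≥0∞))⁻¹ • ∑ i, Measure.dirac (x i)

/-- Reference-perturbed empirical measure (conditional particle filter). -/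
def cEmp {E : Type*} [MeasurableSpace E] {N : ℕ} (xstar : E) (x : Fin N → E) : Measure E :=
  ((N : ℝ≥0∞) + 1)⁻¹ • (Measure.dirac xstar + ∑ i, Measure.dirac (x i))

/-- Composition of kernels `𝐌_{n,n+k} = 𝐌_{n+k} ∘ ⋯ ∘ 𝐌_{n+1}`. -/
def kernelComp {α : Type*} [MeasurableSpace α] (K : ℕ → Kernel α α) (n : ℕ) :
    ℕ → Kernel α α
  | 0 => Kernel.id
  | k + 1 => (K (n + k + 1)).comp (kernelComp K n k)

/-- Perturbed Boltzmann–Gibbs update `Ψ̂`. -/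
def hatBG {E : Type*} [MeasurableSpace E] (G : E → ℝ) (xstar : E) (N : ℕ) (μ : Measure E) :
    Measure E :=
  BG G (((N : ℝ≥0∞) + 1)⁻¹ • Measure.dirac xstar + ((N : ℝ≥0∞) / ((N : ℝ≥0∞) + 1)) • μ)

/-- `L^p` norm of a real random variable. -/
def lpN {Ω : Type*} [MeasurableSpace Ω] (P : Measure Ω) (p : ℝ) (X : Ω → ℝ) : ℝ :=
  (∫ ω, |X ω| ^ p ∂P) ^ (1 / p)

/-- Oscillation of a real-valued function. -/
def osc {E : Type*} (f : E → ℝ) : ℝ := ⨆ x, ⨆ y, (f x - f y)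

/-- Squared Hellinger distance with respect to a dominating measure `lam`. -/
def hellingerSq {E : Type*} [MeasurableSpace E] (lam P Q : Measure E) : ℝ :=
  1 - (∫⁻ x, (P.rnDeriv lam x * Q.rnDeriv lam x) ^ (1 / 2 : ℝ) ∂lam).toReal

/-- `Qaux G m lam g k = Q_{k,k+g}`, defined through the densities `m` of the kernels. -/
def Qaux {E : Type*} [MeasurableSpace E] (G : ℕ → E → ℝ) (m : ℕ → E → E → ℝ)
    (lam : Measure E) : ℕ → ℕ → (E → ℝ) → E → ℝ
  | 0, _, φ => φ
  | g + 1, k, φ => fun x => G k x * ∫ y, m (k + 1) x y * Qaux G m lam g (k + 1) φ y ∂lam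

end

lemma aux_sqrt_ineq (c a b : ℝ) (hc : 0 < c) (ha : c ≤ a) (hb : c ≤ b) :
    (a + b) / 2 - Real.sqrt (a * b) ≤ (a - b) ^ 2 / (8 * c) := by
  have ha0 : (0:ℝ) ≤ a := le_trans hc.le ha
  have hb0 : (0:ℝ) ≤ b := le_trans hc.le hb
  have hsa : Real.sqrt a ^ 2 = a := Real.sq_sqrt ha0
  have hsb : Real.sqrt b ^ 2 = b := Real.sq_sqrt hb0
  have hsc : Real.sqrt c ^ 2 = c := Real.sq_sqrt hc.le
  have hca : Real.sqrt c ≤ Real.sqrt a := Real.sqrt_le_sqrt ha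
  have hcb : Real.sqrt c ≤ Real.sqrt b := Real.sqrt_le_sqrt hb
  have hc0 : 0 < Real.sqrt c := Real.sqrt_pos.2 hc
  have hmul : Real.sqrt (a * b) = Real.sqrt a * Real.sqrt b := Real.sqrt_mul ha0 b
  have hst : c ≤ Real.sqrt a * Real.sqrt b := by
    nlinarith [mul_le_mul hca hcb hc0.le (Real.sqrt_nonneg a)]
  have hkey : (0:ℝ) ≤ (Real.sqrt a + Real.sqrt b) ^ 2 - 4 * c := by nlinarith
  rw [hmul, div_sub' (by norm_num : (2:ℝ) ≠ 0)]
  rw [div_le_div_iff₀ (by norm_num) (by positivity)]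
  nlinarith [mul_nonneg (sq_nonneg (Real.sqrt a - Real.sqrt b)) hkey]

lemma aux_amgm (a b : ℝ) (ha : 0 ≤ a) (hb : 0 ≤ b) :
    Real.sqrt (a * b) ≤ (a + b) / 2 := by
  have hsa : Real.sqrt a ^ 2 = a := Real.sq_sqrt ha
  have hsb : Real.sqrt b ^ 2 = b := Real.sq_sqrt hb
  rw [Real.sqrt_mul ha b]
  nlinarith [sq_nonneg (Real.sqrt a - Real.sqrt b)]


/-- Lemma `h2bound`: for a kernel with density bounded between `M̲` and `M̄`,
the expected squared Hellinger distance after one mutation step is controlled by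
the worst-case mean-square difference of integrals over test functions of oscillation ≤ 1. -/
theorem hellinger_sq_bound {E Ω : Type*} [MeasurableSpace E] [MeasurableSpace Ω]
    (Mlow Mhigh : ℝ) (hM0 : 0 < Mlow) (hM1 : Mlow ≤ Mhigh)
    (lam : Measure E) (M : Kernel E E) [IsMarkovKernel M]
    (m : E → E → ℝ) (hmm : Measurable (Function.uncurry m))
    (hMk : ∀ x, M x = lam.withDensity fun y => ENNReal.ofReal (m x y))
    (hmb : ∀ x y, Mlow ≤ m x y ∧ m x y ≤ Mhigh)
    (P : Measure Ω) [IsProbabilityMeasure P]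
    (μ ν : Ω → Measure E) (hμ : Measurable μ) (hν : Measurable ν)
    [∀ ω, IsProbabilityMeasure (μ ω)] [∀ ω, IsProbabilityMeasure (ν ω)] :
    ∫ ω, hellingerSq lam ((μ ω).bind ⇑M) ((ν ω).bind ⇑M) ∂P
      ≤ (1 / 8) * (Mhigh / Mlow) ^ 2 *
        ⨆ φ : {f : E → ℝ // Measurable f ∧ ∀ x y, |f x - f y| ≤ 1},
          ∫ ω, |(∫ x, φ.1 x ∂(μ ω)) - ∫ x, φ.1 x ∂(ν ω)| ^ 2 ∂P := by
  classical
  have hMh0 : 0 < Mhigh := lt_of_lt_of_le hM0 hM1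
  -- Ω and E nonempty
  have hΩ : Nonempty Ω := by
    by_contra h
    rw [not_nonempty_iff] at h
    have h1 : P Set.univ = 1 := measure_univ
    rw [Set.univ_eq_empty_iff.2 h, measure_empty] at h1
    exact zero_ne_one h1
  obtain ⟨ω₀⟩ := hΩ
  have hE : Nonempty E := by
    by_contra h
    rw [not_nonempty_iff] at h
    have h1 : (μ ω₀) Set.univ = 1 := measure_univ
    rw [Set.univ_eq_empty_iff.2 h, measure_empty] at h1
    exact zero_ne_one h1
  obtain ⟨x₀⟩ := hE
  haveI : Nonempty E := ⟨x₀⟩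
  -- lam is a finite measure
  have hlam1 : ENNReal.ofReal Mlow * lam Set.univ ≤ 1 := by
    have h1 : (M x₀) Set.univ = 1 := measure_univ
    rw [hMk, withDensity_apply _ MeasurableSet.univ, Measure.restrict_univ] at h1
    calc ENNReal.ofReal Mlow * lam Set.univ = ∫⁻ y, ENNReal.ofReal Mlow ∂lam := by
          rw [lintegral_const]
      _ ≤ ∫⁻ y, ENNReal.ofReal (m x₀ y) ∂lam :=
          lintegral_mono fun y => ENNReal.ofReal_le_ofReal (hmb x₀ y).1
      _ = 1 := h1
  have hlamle : lam Set.univ ≤ ENNReal.ofReal Mlow⁻¹ := by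
    rw [ENNReal.ofReal_inv_of_pos hM0]
    rw [ENNReal.le_inv_iff_mul_le]
    calc lam Set.univ * ENNReal.ofReal Mlow = ENNReal.ofReal Mlow * lam Set.univ := mul_comm _ _
      _ ≤ 1 := hlam1
  haveI hlamfin : IsFiniteMeasure lam := by
    constructor
    exact lt_of_le_of_lt hlamle ENNReal.ofReal_lt_top
  have hlamtr : (lam Set.univ).toReal ≤ Mlow⁻¹ := by
    have := ENNReal.toReal_mono ENNReal.ofReal_ne_top hlamle
    rwa [ENNReal.toReal_ofReal (by positivity)] at this

  -- densities of bound measures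
  set p : Ω → E → ℝ≥0∞ := fun ω x => ∫⁻ y, ENNReal.ofReal (m y x) ∂(μ ω) with hp
  set q : Ω → E → ℝ≥0∞ := fun ω x => ∫⁻ y, ENNReal.ofReal (m y x) ∂(ν ω) with hq
  have hmm' : Measurable fun z : E × E => ENNReal.ofReal (m z.2 z.1) := by
    apply ENNReal.measurable_ofReal.comp
    exact hmm.comp (measurable_snd.prodMk measurable_fst)
  -- general facts for a probability measure κ
  have gen_low : ∀ (κ : Measure E) [IsProbabilityMeasure κ] (x : E),
      ENNReal.ofReal Mlow ≤ ∫⁻ y, ENNReal.ofReal (m y x) ∂κ := by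
    intro κ _ x
    calc ENNReal.ofReal Mlow = ∫⁻ _, ENNReal.ofReal Mlow ∂κ := by
          rw [lintegral_const, measure_univ, mul_one]
      _ ≤ _ := lintegral_mono fun y => ENNReal.ofReal_le_ofReal (hmb y x).1
  have gen_high : ∀ (κ : Measure E) [IsProbabilityMeasure κ] (x : E),
      (∫⁻ y, ENNReal.ofReal (m y x) ∂κ) ≤ ENNReal.ofReal Mhigh := by
    intro κ _ x
    calc (∫⁻ y, ENNReal.ofReal (m y x) ∂κ)
        ≤ ∫⁻ _, ENNReal.ofReal Mhigh ∂κ :=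
          lintegral_mono fun y => ENNReal.ofReal_le_ofReal (hmb y x).2
      _ = ENNReal.ofReal Mhigh := by rw [lintegral_const, measure_univ, mul_one]
  have gen_meas : ∀ (κ : Measure E) [SFinite κ],
      Measurable fun x => ∫⁻ y, ENNReal.ofReal (m y x) ∂κ := by
    intro κ _
    exact Measurable.lintegral_prod_right' (f := fun z : E × E => ENNReal.ofReal (m z.2 z.1)) hmm'
  have gen_bind : ∀ (κ : Measure E) [IsProbabilityMeasure κ],
      κ.bind ⇑M = lam.withDensity (fun x => ∫⁻ y, ENNReal.ofReal (m y x) ∂κ) := by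
    intro κ _
    ext A hA
    rw [Measure.bind_apply hA M.measurable.aemeasurable, withDensity_apply _ hA]
    have : ∀ y, (M y) A = ∫⁻ x in A, ENNReal.ofReal (m y x) ∂lam := by
      intro y; rw [hMk, withDensity_apply _ hA]
    simp_rw [this]
    exact lintegral_lintegral_swap (ENNReal.measurable_ofReal.comp hmm).aemeasurable

  have gen_mass : ∀ (κ : Measure E) [IsProbabilityMeasure κ],
      ∫⁻ x, (∫⁻ y, ENNReal.ofReal (m y x) ∂κ) ∂lam = 1 := by
    intro κ _
    have h := congrArg (fun ρ : Measure E => ρ Set.univ) (gen_bind κ)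
    simp only [withDensity_apply _ MeasurableSet.univ, Measure.restrict_univ] at h
    rw [← h, Measure.bind_apply MeasurableSet.univ M.measurable.aemeasurable]
    simp [measure_univ]
  have gen_rn : ∀ (κ : Measure E) [IsProbabilityMeasure κ],
      (κ.bind ⇑M).rnDeriv lam =ᵐ[lam] fun x => ∫⁻ y, ENNReal.ofReal (m y x) ∂κ := by
    intro κ _
    rw [gen_bind κ]
    exact Measure.rnDeriv_withDensity lam (gen_meas κ)
  -- real densities
  set Pr : Ω → E → ℝ := fun ω x => (p ω x).toReal with hPr
  set Qr : Ω → E → ℝ := fun ω x => (q ω x).toReal with hQr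
  have hpne : ∀ ω x, p ω x ≠ ∞ := fun ω x =>
    (lt_of_le_of_lt (gen_high (μ ω) x) ENNReal.ofReal_lt_top).ne
  have hqne : ∀ ω x, q ω x ≠ ∞ := fun ω x =>
    (lt_of_le_of_lt (gen_high (ν ω) x) ENNReal.ofReal_lt_top).ne
  have hPrlow : ∀ ω x, Mlow ≤ Pr ω x := by
    intro ω x
    have := ENNReal.toReal_mono (hpne ω x) (gen_low (μ ω) x)
    rwa [ENNReal.toReal_ofReal hM0.le] at this
  have hQrlow : ∀ ω x, Mlow ≤ Qr ω x := by
    intro ω x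
    have := ENNReal.toReal_mono (hqne ω x) (gen_low (ν ω) x)
    rwa [ENNReal.toReal_ofReal hM0.le] at this
  have hPrhigh : ∀ ω x, Pr ω x ≤ Mhigh := by
    intro ω x
    have := ENNReal.toReal_mono ENNReal.ofReal_ne_top (gen_high (μ ω) x)
    rwa [ENNReal.toReal_ofReal hMh0.le] at this
  have hQrhigh : ∀ ω x, Qr ω x ≤ Mhigh := by
    intro ω x
    have := ENNReal.toReal_mono ENNReal.ofReal_ne_top (gen_high (ν ω) x)
    rwa [ENNReal.toReal_ofReal hMh0.le] at this
  -- joint measurability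
  have hjoint : ∀ (κ : Ω → Measure E), Measurable κ → (∀ ω, IsProbabilityMeasure (κ ω)) →
      Measurable fun z : Ω × E => ∫⁻ y, ENNReal.ofReal (m y z.2) ∂(κ z.1) := by
    intro κ hκ hκp
    haveI : ∀ ω, IsProbabilityMeasure (κ ω) := hκp
    set K : Kernel Ω E := ⟨κ, hκ⟩ with hK
    haveI : IsMarkovKernel K := ⟨fun ω => hκp ω⟩
    set K2 : Kernel (Ω × E) E := K.comap Prod.fst measurable_fst with hK2
    haveI : IsMarkovKernel K2 := by
      rw [hK2]; infer_instance
    have : Measurable fun z : Ω × E => ∫⁻ y, ENNReal.ofReal (m y z.2) ∂(K2 z) := by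
      apply Measurable.lintegral_kernel_prod_right' (κ := K2)
        (f := fun u : (Ω × E) × E => ENNReal.ofReal (m u.2 u.1.2))
      exact Measurable.ennreal_ofReal (hmm.comp' (measurable_snd.prodMk measurable_fst.snd))
    simpa [hK2, Kernel.comap_apply, hK] using this
  have hPjoint : Measurable fun z : Ω × E => p z.1 z.2 := hjoint μ hμ inferInstance
  have hQjoint : Measurable fun z : Ω × E => q z.1 z.2 := hjoint ν hν inferInstance
  have hPrjoint : Measurable fun z : Ω × E => Pr z.1 z.2 :=
    ENNReal.measurable_toReal.comp hPjoint
  have hQrjoint : Measurable fun z : Ω × E => Qr z.1 z.2 :=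
    ENNReal.measurable_toReal.comp hQjoint


  -- the supremum
  set S : ℝ := ⨆ φ : {f : E → ℝ // Measurable f ∧ ∀ x y, |f x - f y| ≤ 1},
      ∫ ω, |(∫ x, φ.1 x ∂(μ ω)) - ∫ x, φ.1 x ∂(ν ω)| ^ 2 ∂P with hS
  have key : ∀ (φ : E → ℝ), Measurable φ → (∀ x y, |φ x - φ y| ≤ 1) → ∀ ω,
      |(∫ x, φ x ∂(μ ω)) - ∫ x, φ x ∂(ν ω)| ≤ 1 := by
    intro φ hφm hφo ω
    have hbddb : BddBelow (Set.range φ) := by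
      refine ⟨φ x₀ - 1, ?_⟩
      rintro _ ⟨y, rfl⟩
      linarith [(abs_le.1 (hφo x₀ y)).2]
    set c := ⨅ y, φ y with hc
    have hlo : ∀ y, c ≤ φ y := fun y => ciInf_le hbddb y
    have hhi : ∀ y, φ y ≤ c + 1 := by
      intro y
      have h : φ y - 1 ≤ c :=
        le_ciInf fun y' => by linarith [(abs_le.1 (hφo y y')).2]
      linarith
    have habs : ∀ y, ‖φ y‖ ≤ |c| + 1 := by
      intro y; rw [Real.norm_eq_abs, abs_le]
      constructor
      · linarith [neg_abs_le c, hlo y]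
      · linarith [le_abs_self c, hhi y]
    have hint : ∀ (κ : Measure E) [IsProbabilityMeasure κ], Integrable φ κ := by
      intro κ _
      exact Integrable.mono' (integrable_const (|c| + 1)) hφm.aestronglyMeasurable
        (ae_of_all _ habs)
    have hIb : ∀ (κ : Measure E) [IsProbabilityMeasure κ],
        c ≤ (∫ y, φ y ∂κ) ∧ (∫ y, φ y ∂κ) ≤ c + 1 := by
      intro κ _
      constructor
      · calc c = ∫ _, c ∂κ := by simp
          _ ≤ ∫ y, φ y ∂κ := integral_mono (integrable_const c) (hint κ) hlo
      · calc (∫ y, φ y ∂κ) ≤ ∫ _, c + 1 ∂κ := integral_mono (hint κ) (integrable_const _) hhi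
          _ = c + 1 := by simp
    obtain ⟨h1, h2⟩ := hIb (μ ω)
    obtain ⟨h3, h4⟩ := hIb (ν ω)
    rw [abs_le]
    constructor <;> linarith
  have hBdd : BddAbove (Set.range fun φ : {f : E → ℝ // Measurable f ∧ ∀ x y, |f x - f y| ≤ 1} =>
      ∫ ω, |(∫ x, φ.1 x ∂(μ ω)) - ∫ x, φ.1 x ∂(ν ω)| ^ 2 ∂P) := by
    refine ⟨1, ?_⟩
    rintro _ ⟨φ, rfl⟩
    dsimp only
    by_cases hi : Integrable (fun ω => |(∫ x, φ.1 x ∂(μ ω)) - ∫ x, φ.1 x ∂(ν ω)| ^ 2) P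
    · calc ∫ ω, |(∫ x, φ.1 x ∂(μ ω)) - ∫ x, φ.1 x ∂(ν ω)| ^ 2 ∂P
          ≤ ∫ _, (1:ℝ) ∂P := by
            refine integral_mono hi (integrable_const 1) fun ω => ?_
            have h1 := key φ.1 φ.2.1 φ.2.2 ω
            have h0 : (0:ℝ) ≤ |(∫ x, φ.1 x ∂(μ ω)) - ∫ x, φ.1 x ∂(ν ω)| := abs_nonneg _
            nlinarith
        _ = 1 := by simp
    · rw [integral_undef hi]; norm_num
  have hS0 : 0 ≤ S := by
    have h := le_ciSup hBdd ⟨(fun _ => (0:ℝ)), measurable_const, by intro x y; simp⟩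
    exact le_trans (le_of_eq (by simp)) h

  -- integrability helper on lam
  have intb : ∀ (f : E → ℝ) (C : ℝ), Measurable f → (∀ x, |f x| ≤ C) → Integrable f lam := by
    intro f C hf hC
    exact Integrable.mono' (integrable_const C) hf.aestronglyMeasurable
      (ae_of_all _ fun x => by rw [Real.norm_eq_abs]; exact hC x)
  have hPm : ∀ ω, Measurable (Pr ω) := fun ω => ENNReal.measurable_toReal.comp (gen_meas (μ ω))
  have hQm : ∀ ω, Measurable (Qr ω) := fun ω => ENNReal.measurable_toReal.comp (gen_meas (ν ω))
  have hPmass : ∀ ω, ∫ x, Pr ω x ∂lam = 1 := by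
    intro ω
    have h1 : ∫ x, Pr ω x ∂lam = (∫⁻ x, p ω x ∂lam).toReal :=
      integral_toReal (gen_meas (μ ω)).aemeasurable
        (ae_of_all _ fun x => (hpne ω x).lt_top)
    have h2 : ∫⁻ x, p ω x ∂lam = 1 := gen_mass (μ ω)
    rw [h1, h2, ENNReal.toReal_one]
  have hQmass : ∀ ω, ∫ x, Qr ω x ∂lam = 1 := by
    intro ω
    have h1 : ∫ x, Qr ω x ∂lam = (∫⁻ x, q ω x ∂lam).toReal :=
      integral_toReal (gen_meas (ν ω)).aemeasurable
        (ae_of_all _ fun x => (hqne ω x).lt_top)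
    have h2 : ∫⁻ x, q ω x ∂lam = 1 := gen_mass (ν ω)
    rw [h1, h2, ENNReal.toReal_one]
  have hsqrtm : ∀ ω, Measurable fun x => Real.sqrt (Pr ω x * Qr ω x) := fun ω =>
    Real.continuous_sqrt.measurable.comp ((hPm ω).mul (hQm ω))
  have hsqrtb : ∀ ω x, |Real.sqrt (Pr ω x * Qr ω x)| ≤ Mhigh := by
    intro ω x
    rw [abs_of_nonneg (Real.sqrt_nonneg _)]
    calc Real.sqrt (Pr ω x * Qr ω x) ≤ Real.sqrt (Mhigh * Mhigh) := by
          apply Real.sqrt_le_sqrt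
          apply mul_le_mul (hPrhigh ω x) (hQrhigh ω x) (le_trans hM0.le (hQrlow ω x)) hMh0.le
      _ = Mhigh := by rw [Real.sqrt_mul_self hMh0.le]
  have hhell_eq : ∀ ω, hellingerSq lam ((μ ω).bind ⇑M) ((ν ω).bind ⇑M)
      = 1 - ∫ x, Real.sqrt (Pr ω x * Qr ω x) ∂lam := by
    intro ω
    have hmeaspq : Measurable fun x => (p ω x * q ω x) ^ (1/2:ℝ) :=
      ((gen_meas (μ ω)).mul (gen_meas (ν ω))).pow measurable_const
    have hlint : ∫⁻ x, (((μ ω).bind ⇑M).rnDeriv lam x * ((ν ω).bind ⇑M).rnDeriv lam x) ^ (1/2:ℝ) ∂lam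
        = ∫⁻ x, (p ω x * q ω x) ^ (1/2:ℝ) ∂lam := by
      apply lintegral_congr_ae
      filter_upwards [gen_rn (μ ω), gen_rn (ν ω)] with x h1 h2
      rw [h1, h2]
    have hfin : ∀ x, (p ω x * q ω x) ^ (1/2:ℝ) < ∞ := fun x =>
      ENNReal.rpow_lt_top_of_nonneg (by norm_num)
        (ENNReal.mul_ne_top (hpne ω x) (hqne ω x))
    have htr : (∫⁻ x, (p ω x * q ω x) ^ (1/2:ℝ) ∂lam).toReal
        = ∫ x, Real.sqrt (Pr ω x * Qr ω x) ∂lam := by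
      rw [← integral_toReal hmeaspq.aemeasurable (ae_of_all _ hfin)]
      apply integral_congr_ae
      apply ae_of_all
      intro x
      dsimp only
      rw [← ENNReal.toReal_rpow, ENNReal.toReal_mul, Real.sqrt_eq_rpow]
    rw [hellingerSq, hlint, htr]
  have hint_sqrt : ∀ ω, Integrable (fun x => Real.sqrt (Pr ω x * Qr ω x)) lam := fun ω =>
    intb _ Mhigh (hsqrtm ω) (hsqrtb ω)
  have hint_P : ∀ ω, Integrable (Pr ω) lam := fun ω =>
    intb _ Mhigh (hPm ω) fun x => abs_le.2 ⟨by linarith [hPrlow ω x], hPrhigh ω x⟩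
  have hint_Q : ∀ ω, Integrable (Qr ω) lam := fun ω =>
    intb _ Mhigh (hQm ω) fun x => abs_le.2 ⟨by linarith [hQrlow ω x], hQrhigh ω x⟩
  have hdiffb : ∀ ω x, |Pr ω x - Qr ω x| ≤ Mhigh :=
    fun ω x => abs_le.2 ⟨by linarith [hQrhigh ω x, hPrlow ω x, hM0],
      by linarith [hPrhigh ω x, hQrlow ω x, hM0]⟩
  have hint_sq : ∀ ω, Integrable (fun x => (Pr ω x - Qr ω x) ^ 2) lam := by
    intro ω
    apply intb _ (Mhigh ^ 2) (((hPm ω).sub (hQm ω)).pow measurable_const)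
    intro x
    rw [abs_of_nonneg (sq_nonneg _)]
    calc (Pr ω x - Qr ω x) ^ 2 = |Pr ω x - Qr ω x| ^ 2 := (sq_abs _).symm
      _ ≤ Mhigh ^ 2 := pow_le_pow_left₀ (abs_nonneg _) (hdiffb ω x) 2
  -- per-ω bounds
  have hpt0 : ∀ ω, 0 ≤ hellingerSq lam ((μ ω).bind ⇑M) ((ν ω).bind ⇑M) := by
    intro ω
    rw [hhell_eq ω, sub_nonneg]
    calc ∫ x, Real.sqrt (Pr ω x * Qr ω x) ∂lam
        ≤ ∫ x, (Pr ω x + Qr ω x) / 2 ∂lam := by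
          refine integral_mono (hint_sqrt ω) (((hint_P ω).add (hint_Q ω)).div_const 2) fun x => ?_
          exact aux_amgm _ _ (le_trans hM0.le (hPrlow ω x)) (le_trans hM0.le (hQrlow ω x))
      _ = 1 := by
          rw [integral_div, integral_add (hint_P ω) (hint_Q ω), hPmass, hQmass]; norm_num
  have hpt : ∀ ω, hellingerSq lam ((μ ω).bind ⇑M) ((ν ω).bind ⇑M)
      ≤ (8 * Mlow)⁻¹ * ∫ x, (Pr ω x - Qr ω x) ^ 2 ∂lam := by
    intro ω
    rw [hhell_eq ω]
    have i1 : Integrable (fun x => (Pr ω x + Qr ω x) / 2) lam :=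
      ((hint_P ω).add (hint_Q ω)).div_const 2
    have e1 : 1 - ∫ x, Real.sqrt (Pr ω x * Qr ω x) ∂lam
        = ∫ x, ((Pr ω x + Qr ω x) / 2 - Real.sqrt (Pr ω x * Qr ω x)) ∂lam := by
      rw [integral_sub i1 (hint_sqrt ω), integral_div,
        integral_add (hint_P ω) (hint_Q ω), hPmass, hQmass]
      norm_num
    rw [e1]
    calc ∫ x, ((Pr ω x + Qr ω x) / 2 - Real.sqrt (Pr ω x * Qr ω x)) ∂lam
        ≤ ∫ x, (Pr ω x - Qr ω x) ^ 2 / (8 * Mlow) ∂lam := by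
          refine integral_mono
            ((((hint_P ω).add (hint_Q ω)).div_const 2).sub (hint_sqrt ω))
            ((hint_sq ω).div_const _) fun x => ?_
          exact aux_sqrt_ineq Mlow _ _ hM0 (hPrlow ω x) (hQrlow ω x)
      _ = (8 * Mlow)⁻¹ * ∫ x, (Pr ω x - Qr ω x) ^ 2 ∂lam := by
          rw [integral_div, div_eq_inv_mul]

  -- Fubini setup
  set f : Ω → E → ℝ := fun ω x => (Pr ω x - Qr ω x) ^ 2 with hf
  have hFmeas : Measurable (Function.uncurry f) :=
    ((hPrjoint.sub hQrjoint).pow measurable_const)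
  have hFint : Integrable (Function.uncurry f) (P.prod lam) := by
    apply Integrable.mono' (integrable_const (Mhigh ^ 2)) hFmeas.aestronglyMeasurable
    apply ae_of_all
    rintro ⟨ω, x⟩
    rw [Function.uncurry_apply_pair, Real.norm_eq_abs, abs_of_nonneg (sq_nonneg _)]
    calc (Pr ω x - Qr ω x) ^ 2 = |Pr ω x - Qr ω x| ^ 2 := (sq_abs _).symm
      _ ≤ Mhigh ^ 2 := pow_le_pow_left₀ (abs_nonneg _) (hdiffb ω x) 2
  have hGint : Integrable (fun ω => ∫ x, f ω x ∂lam) P := hFint.integral_prod_left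
  -- per-x bound via test functions
  have hx : ∀ x, ∫ ω, f ω x ∂P ≤ Mhigh ^ 2 * S := by
    intro x
    set φx : E → ℝ := fun y => m y x / Mhigh with hφx
    have hφm : Measurable φx :=
      (hmm.comp' (measurable_id.prodMk measurable_const)).div_const Mhigh
    have hφo : ∀ y y', |φx y - φx y'| ≤ 1 := by
      intro y y'
      rw [hφx]
      rw [div_sub_div_same, abs_div, abs_of_pos hMh0, div_le_one hMh0]
      refine abs_le.2 ⟨?_, ?_⟩
      · linarith [(hmb y x).1, (hmb y' x).2]
      · linarith [(hmb y x).2, (hmb y' x).1]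
    have hrel : ∀ (κ : Measure E) [IsProbabilityMeasure κ],
        ∫ y, φx y ∂κ = (∫⁻ y, ENNReal.ofReal (m y x) ∂κ).toReal / Mhigh := by
      intro κ _
      rw [hφx]
      rw [integral_div]
      congr 1
      rw [integral_eq_lintegral_of_nonneg_ae (ae_of_all _ fun y => le_trans hM0.le (hmb y x).1)
        ((hmm.comp' (measurable_id.prodMk measurable_const)).aestronglyMeasurable)]
    have e2 : ∀ ω, f ω x = Mhigh ^ 2 * |(∫ y, φx y ∂(μ ω)) - ∫ y, φx y ∂(ν ω)| ^ 2 := by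
      intro ω
      rw [sq_abs, hrel (μ ω), hrel (ν ω), hf]
      have hPx : Pr ω x = (p ω x).toReal := rfl
      have hQx : Qr ω x = (q ω x).toReal := rfl
      dsimp only
      rw [div_sub_div_same]
      field_simp
      rfl
    calc ∫ ω, f ω x ∂P
        = ∫ ω, Mhigh ^ 2 * |(∫ y, φx y ∂(μ ω)) - ∫ y, φx y ∂(ν ω)| ^ 2 ∂P := by
          apply integral_congr_ae (ae_of_all _ fun ω => e2 ω)
      _ = Mhigh ^ 2 * ∫ ω, |(∫ y, φx y ∂(μ ω)) - ∫ y, φx y ∂(ν ω)| ^ 2 ∂P :=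
          integral_const_mul _ _
      _ ≤ Mhigh ^ 2 * S := by
          apply mul_le_mul_of_nonneg_left _ (by positivity)
          exact le_ciSup hBdd ⟨φx, hφm, hφo⟩
  -- assemble
  have hGint2 : Integrable (fun x => ∫ ω, f ω x ∂P) lam := hFint.integral_prod_right
  calc ∫ ω, hellingerSq lam ((μ ω).bind ⇑M) ((ν ω).bind ⇑M) ∂P
      ≤ ∫ ω, (8 * Mlow)⁻¹ * ∫ x, f ω x ∂lam ∂P :=
        integral_mono_of_nonneg (ae_of_all _ hpt0) (hGint.const_mul _) (ae_of_all _ hpt)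
    _ = (8 * Mlow)⁻¹ * ∫ ω, ∫ x, f ω x ∂lam ∂P := integral_const_mul _ _
    _ = (8 * Mlow)⁻¹ * ∫ x, ∫ ω, f ω x ∂P ∂lam := by rw [integral_integral_swap hFint]
    _ ≤ (8 * Mlow)⁻¹ * (Mhigh ^ 2 * S * (lam Set.univ).toReal) := by
        apply mul_le_mul_of_nonneg_left _ (by positivity)
        calc ∫ x, ∫ ω, f ω x ∂P ∂lam
            ≤ ∫ _, Mhigh ^ 2 * S ∂lam := integral_mono hGint2 (integrable_const _) hx
          _ = Mhigh ^ 2 * S * (lam Set.univ).toReal := by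
              rw [integral_const, smul_eq_mul, mul_comm, measureReal_def]
    _ ≤ (8 * Mlow)⁻¹ * (Mhigh ^ 2 * S * Mlow⁻¹) := by
        apply mul_le_mul_of_nonneg_left _ (by positivity)
        apply mul_le_mul_of_nonneg_left hlamtr (by positivity)
    _ = (1 / 8) * (Mhigh / Mlow) ^ 2 * S := by
        rw [div_pow, mul_inv, div_eq_mul_inv]
        ring
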